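/- Let τ = (1+√5)/2 and let ‖x‖ denote the distance from a real number x to the nearest integer. If k is a positive integer satisfying f_{n−1} < k < f_n (so k is strictly between two consecutive Fibonacci numbers), then ‖τk‖ > 1/τ^{n−2}. -/

import Mathlib

/-- The two-letter alphabet. -/
inductive Letter : Type
  | a : Letter
  | b : Letter
deriving DecidableEq

/-- A word is a finite sequence of letters. -/
abbrev Word := List Letter

/-- Concatenation set `UV = {uv : u ∈ U, v ∈ V}`. -/
def concatSet (U V : Set Word) : Set Word := {w | ∃ u ∈ U, ∃ v ∈ V, w = u ++ v}

mutual
  /-- The sets `A_n` of inflated words (indexed so that `Aset 1 = {a}`). -/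
  def Aset : ℕ → Set Word
    | 0 => ∅
    | 1 => {[Letter.a]}
    | n + 2 => concatSet (Bset (n + 1)) (concatSet (Aset (n + 1)) (Aset (n + 1)))
  /-- The sets `B_n` of inflated words (indexed so that `Bset 1 = {b}`). -/
  def Bset : ℕ → Set Word
    | 0 => ∅
    | 1 => {[Letter.b]}
    | n + 2 => concatSet (Aset (n + 1)) (Bset (n + 1)) ∪ concatSet (Bset (n + 1)) (Aset (n + 1))
end

/-- The sub-word `w[a,b] = w_a w_{a+1} … w_b` (1-indexed). -/
def wordSlice (w : Word) (i j : ℕ) : Word := (w.drop (i - 1)).take (j - i + 1)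

/-- `W[a,b] = {w[a,b] : w ∈ W}`. -/
def setSlice (W : Set Word) (i j : ℕ) : Set Word := {x | ∃ w ∈ W, x = wordSlice w i j}

/-- `x` is a sub-word (contiguous factor) of `w`. -/
def IsFactor (x w : Word) : Prop := ∃ u v : Word, w = u ++ x ++ v

/-- `F(S, m)`: the set of all sub-words of length `m` of words in `S`. -/
def FactorSet (S : Set Word) (m : ℕ) : Set Word :=
  {x | x.length = m ∧ ∃ w ∈ S, IsFactor x w}

/-- `F(A, m) = ⋃_{n ≥ 1} F(A_n, m)`. -/
def FA (m : ℕ) : Set Word := ⋃ n ∈ {n : ℕ | 1 ≤ n}, FactorSet (Aset n) m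

/-- `F(B, m) = ⋃_{n ≥ 1} F(B_n, m)`. -/
def FB (m : ℕ) : Set Word := ⋃ n ∈ {n : ℕ | 1 ≤ n}, FactorSet (Bset n) m

/-- The golden mean `τ = (1 + √5)/2`. -/
noncomputable def tau : ℝ := (1 + Real.sqrt 5) / 2

open goldenRatio Real in
lemma pell_fib_aux : ∀ k : ℕ, ∀ m : ℕ, 1 ≤ k → 1 ≤ m →
    ((m:ℤ)^2 - k*m - k^2 = 1 ∨ (m:ℤ)^2 - k*m - k^2 = -1) →
    ∃ j, k = Nat.fib j ∧ m = Nat.fib (j+1) := by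
  intro k
  induction k using Nat.strong_induction_on with
  | _ k ih =>
    intro m hk hm heq
    rcases eq_or_lt_of_le hk with h1 | hk2
    · -- k = 1
      subst h1  -- maybe wrong direction
      rcases Nat.lt_or_ge m 3 with hm3 | hm3
      · interval_cases m
        · exact ⟨1, rfl, rfl⟩
        · exact ⟨2, rfl, rfl⟩
      · exfalso
        have h3 : (3:ℤ) ≤ (m:ℤ) := by exact_mod_cast hm3
        rcases heq with h | h <;> push_cast at h <;> nlinarith
    · -- 2 ≤ k
      have hK2 : (2:ℤ) ≤ (k:ℤ) := by exact_mod_cast hk2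
      have hM1 : (1:ℤ) ≤ (m:ℤ) := by exact_mod_cast hm
      have hkm : k < m := by
        by_contra h
        have h' : (m:ℤ) ≤ k := by exact_mod_cast Nat.le_of_not_lt h
        have hnn : (0:ℤ) ≤ (m:ℤ) * ((k:ℤ) - m) := by
          apply mul_nonneg <;> linarith
        rcases heq with h | h <;> nlinarith
      have hm2k : m < 2*k := by
        by_contra h
        have h' : 2*(k:ℤ) ≤ (m:ℤ) := by exact_mod_cast Nat.le_of_not_lt h
        have hnn : (0:ℤ) ≤ ((m:ℤ) - 2*k) * ((m:ℤ) - k) := by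
          apply mul_nonneg <;> linarith
        rcases heq with h | h <;> nlinarith
      have hcast : ((m - k : ℕ) : ℤ) = (m:ℤ) - k := by
        push_cast [Nat.cast_sub hkm.le]; ring
      have heq' : ((k:ℤ))^2 - (↑(m-k))*k - (↑(m-k))^2 = 1 ∨
          ((k:ℤ))^2 - (↑(m-k))*k - (↑(m-k))^2 = -1 := by
        rcases heq with h | h
        · right; rw [hcast]; linear_combination -h
        · left; rw [hcast]; linear_combination -h
      obtain ⟨j, hj1, hj2⟩ := ih (m - k) (by omega) k (by omega) (by omega) heq'
      refine ⟨j+1, hj2, ?_⟩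
      rw [Nat.fib_add_two]
      omega

open goldenRatio Real in
lemma pell_fib (k : ℕ) (hk : 1 ≤ k) (m : ℤ)
    (heq : m^2 - k*m - k^2 = 1 ∨ m^2 - k*m - k^2 = -1) : ∃ j, k = Nat.fib j := by
  rcases lt_trichotomy m 0 with hm | hm | hm
  · set t := (-m).toNat with ht
    have htZ : (t:ℤ) = -m := Int.toNat_of_nonneg (by omega)
    by_cases hlt : t < k
    · have h1t : 1 ≤ t := by omega
      have heq' : ((k:ℤ))^2 - t*k - (t:ℤ)^2 = 1 ∨ ((k:ℤ))^2 - t*k - (t:ℤ)^2 = -1 := by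
        rcases heq with h | h
        · right; rw [htZ]; linear_combination -h
        · left; rw [htZ]; linear_combination -h
      obtain ⟨j, _, hj⟩ := pell_fib_aux t k h1t hk heq'
      exact ⟨j+1, hj⟩
    · have hk1 : k = 1 := by
        by_contra h
        have hK2 : (2:ℤ) ≤ (k:ℤ) := by exact_mod_cast (by omega : 2 ≤ k)
        have hT : (k:ℤ) ≤ t := by exact_mod_cast Nat.le_of_not_lt hlt
        rcases heq with h | h <;> nlinarith [htZ]
      exact ⟨1, by simp [hk1]⟩
  · subst hm
    have hK1 : (1:ℤ) ≤ (k:ℤ) := by exact_mod_cast hk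
    have hsq : ((k:ℤ))^2 = 1 := by
      rcases heq with h | h
      · exfalso; nlinarith [sq_nonneg (k:ℤ)]
      · linarith
    have hle : (k:ℤ) ≤ 1 := by nlinarith [sq_nonneg ((k:ℤ) - 1)]
    have : k = 1 := by omega
    exact ⟨1, by simp [this]⟩
  · have hcast : ((m.toNat : ℕ) : ℤ) = m := Int.toNat_of_nonneg hm.le
    have heq' : ((m.toNat:ℕ):ℤ)^2 - k*(m.toNat:ℕ) - k^2 = 1 ∨
        ((m.toNat:ℕ):ℤ)^2 - k*(m.toNat:ℕ) - k^2 = -1 := by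
      rw [hcast]; rcases heq with h | h
      · left; linear_combination h
      · right; linear_combination h
    obtain ⟨j, hj, _⟩ := pell_fib_aux k m.toNat hk (by omega) heq'
    exact ⟨j, hj⟩

open goldenRatio Real in
theorem dist_tau_mul_to_int (n k : ℕ) (hk : 0 < k)
    (h1 : Nat.fib (n - 1) < k) (h2 : k < Nat.fib n) (m : ℤ) :
    |tau * (k : ℝ) - (m : ℝ)| > 1 / tau ^ ((n : ℤ) - 2) := by
  have hn5 : 5 ≤ n := by
    by_contra h
    push_neg at h
    have hb : Nat.fib n ≤ Nat.fib (n-1) + 1 := by interval_cases n <;> decide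
    omega
  -- k is not a Fibonacci number
  have hnF : ∀ j, k ≠ Nat.fib j := by
    intro j hj
    rcases Nat.lt_or_ge j n with hlt | hge
    · have := Nat.fib_mono (show j ≤ n - 1 by omega); omega
    · have := Nat.fib_mono hge; omega
  set N : ℤ := m^2 - k*m - k^2 with hN
  have hN1 : N ≠ 1 ∧ N ≠ -1 := by
    constructor <;> intro h <;>
      obtain ⟨j, hj⟩ := pell_fib k hk m (by rw [← hN]; omega) <;> exact hnF j hj
  -- basic real facts
  have hs2 : Real.sqrt 5 ^ 2 = 5 := Real.sq_sqrt (by norm_num)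
  have hs_nn : 0 ≤ Real.sqrt 5 := Real.sqrt_nonneg 5
  have hs_lb : (2.2:ℝ) < Real.sqrt 5 := by nlinarith
  have hs_ub : Real.sqrt 5 < 2.4 := by nlinarith
  have htau : tau = goldenRatio := rfl
  have htau1 : (1:ℝ) < tau := by rw [htau]; exact one_lt_goldenRatio
  have htau2 : tau^2 = tau + 1 := by rw [htau]; exact goldenRatio_sq
  have htlt : tau < 2 := by rw [htau]; exact goldenRatio_lt_two
  -- product identity
  have hprod : (tau*(k:ℝ) - m) * ((1 - tau)*(k:ℝ) - m) = (N:ℝ) := by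
    rw [hN]; push_cast
    simp only [tau]
    linear_combination (-(k:ℝ)^2/4) * hs2
  -- the two factors are nonzero
  have hkne : ((k:ℝ)) ≠ 0 := by
    exact_mod_cast hk.ne'
  have hf1 : tau*(k:ℝ) - m ≠ 0 := by
    intro h
    apply goldenRatio_irrational
    refine ⟨(m : ℚ)/(k:ℚ), ?_⟩
    rw [← htau]
    push_cast
    rw [div_eq_iff hkne]
    linarith
  have hf2 : (1 - tau)*(k:ℝ) - m ≠ 0 := by
    intro h
    apply goldenConj_irrational
    have h1t : (1 : ℝ) - tau = goldenConj := by rw [htau]; exact one_sub_goldenConj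
    refine ⟨(m : ℚ)/(k:ℚ), ?_⟩
    rw [← h1t]
    push_cast
    rw [div_eq_iff hkne]
    linarith
  have hNne : N ≠ 0 := by
    intro h
    rw [h] at hprod
    push_cast at hprod
    rcases mul_eq_zero.1 hprod with h' | h'
    · exact hf1 h'
    · exact hf2 h'
  -- mod 5: N ∉ {±2, ±3}
  have hzmod : ∀ x : ZMod 5, x^2 ≠ 3 ∧ x^2 ≠ 2 := by decide
  have hc : (2*(m : ZMod 5) - ((k:ℕ) : ZMod 5))^2 = 4 * ((N : ℤ) : ZMod 5) := by
    have h4 : (4*N : ℤ) = (2*m - k)^2 - 5*k^2 := by rw [hN]; ring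
    have h4' := congrArg (Int.cast : ℤ → ZMod 5) h4
    push_cast at h4'
    have h5 : (5 : ZMod 5) = 0 := by decide
    linear_combination -h4' + ((k:ℕ) : ZMod 5)^2 * h5
  have hmod : N ≠ 2 ∧ N ≠ -2 ∧ N ≠ 3 ∧ N ≠ -3 := by
    refine ⟨?_, ?_, ?_, ?_⟩ <;> intro h <;> rw [h] at hc <;> push_cast at hc
    · exact (hzmod _).1 (by rw [hc]; decide)
    · exact (hzmod _).2 (by rw [hc]; decide)
    · exact (hzmod _).2 (by rw [hc]; decide)
    · exact (hzmod _).1 (by rw [hc]; decide)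
  have hN4 : (4:ℤ) ≤ |N| := by
    rcases abs_cases N with ⟨h, _⟩ | ⟨h, _⟩ <;> omega
  have hN4' : (4:ℝ) ≤ |(N:ℝ)| := by
    rw [← Int.cast_abs]; exact_mod_cast hN4
  -- Binet / fib bound
  have hfib : (Nat.fib n : ℝ) = (goldenRatio^n - goldenConj^n)/Real.sqrt 5 :=
    Real.coe_fib_eq n
  have hψ : |goldenConj ^ n| ≤ 1 := by
    rw [abs_pow]
    apply pow_le_one₀ (abs_nonneg _)
    rw [abs_le]
    constructor <;> simp only [goldenConj] <;> nlinarith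
  have hsfib : Real.sqrt 5 * (Nat.fib n : ℝ) = tau^n - goldenConj^n := by
    rw [hfib, htau]
    field_simp
  have hkb : (k:ℝ) ≤ (Nat.fib n : ℝ) - 1 := by
    have : (k:ℝ) + 1 ≤ (Nat.fib n : ℝ) := by exact_mod_cast h2
    linarith
  have h3' : Real.sqrt 5 * (k:ℝ) ≤ tau^n + 1 - Real.sqrt 5 := by
    have hb1 : Real.sqrt 5 * (k:ℝ) ≤ Real.sqrt 5 * ((Nat.fib n : ℝ) - 1) := by
      apply mul_le_mul_of_nonneg_left hkb hs_nn
    have hb2 : -goldenConj^n ≤ 1 := by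
      have := neg_abs_le (goldenConj ^ n); linarith
    nlinarith [hsfib]
  -- main contradiction
  by_contra hcon
  push_neg at hcon
  set ε : ℝ := 1 / tau ^ ((n : ℤ) - 2) with hε
  set d : ℝ := |tau * (k:ℝ) - m| with hd
  have htpos : (0:ℝ) < tau := by linarith
  have hεpos : 0 < ε := by
    rw [hε]; positivity
  have hε1 : ε ≤ 1 := by
    rw [hε]
    rw [div_le_one (by positivity)]
    apply one_le_zpow₀ htau1.le (by omega)
  have hεn : ε * tau^n = tau^2 := by
    rw [hε]
    rw [div_mul_eq_mul_div, one_mul, ← zpow_natCast tau n,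
      ← zpow_sub₀ (ne_of_gt htpos)]
    rw [show (n:ℤ) - ((n:ℤ) - 2) = 2 by ring]
    rw [zpow_two, sq]
  have hdnn : 0 ≤ d := abs_nonneg _
  have c1 : (4:ℝ) ≤ d * (d + Real.sqrt 5 * (k:ℝ)) := by
    have e1 : |(N:ℝ)| = d * |(1 - tau)*(k:ℝ) - m| := by
      rw [hd, ← abs_mul, hprod]
    have e2 : |(1 - tau)*(k:ℝ) - m| ≤ d + Real.sqrt 5 * (k:ℝ) := by
      have eq1 : (1 - tau)*(k:ℝ) - m = (tau*(k:ℝ) - m) - Real.sqrt 5 * (k:ℝ) := by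
        simp only [tau]; ring
      rw [eq1]
      calc |(tau*(k:ℝ) - m) - Real.sqrt 5 * (k:ℝ)|
          ≤ |tau*(k:ℝ) - m| + |Real.sqrt 5 * (k:ℝ)| := abs_sub _ _
        _ = d + Real.sqrt 5 * (k:ℝ) := by
            rw [abs_of_nonneg (mul_nonneg hs_nn (by positivity : (0:ℝ) ≤ (k:ℝ)))]
    calc (4:ℝ) ≤ |(N:ℝ)| := hN4'
      _ = d * |(1 - tau)*(k:ℝ) - m| := e1
      _ ≤ d * (d + Real.sqrt 5 * (k:ℝ)) := mul_le_mul_of_nonneg_left e2 hdnn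
  have c2 : d * (d + Real.sqrt 5 * (k:ℝ)) ≤ ε * (ε + (tau^n + 1 - Real.sqrt 5)) := by
    apply mul_le_mul hcon (by linarith) (by positivity) hεpos.le
  have c3 : ε * (ε + (tau^n + 1 - Real.sqrt 5)) = ε^2 + tau^2 + ε*(1 - Real.sqrt 5) := by
    have : ε * (ε + (tau^n + 1 - Real.sqrt 5))
        = ε^2 + ε*tau^n + ε*(1 - Real.sqrt 5) := by ring
    rw [this, hεn]
  have hε2 : ε^2 ≤ 1 := pow_le_one₀ hεpos.le hε1
  have hεs : ε*(1 - Real.sqrt 5) ≤ 0 :=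
    mul_nonpos_of_nonneg_of_nonpos hεpos.le (by linarith)
  linarith [c1, c2, c3, hε2, hεs, htau2, htlt]
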